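/- For all k, ν ∈ ℝ the following hold for the Hilbert–Schmidt inner products with L_{k,k+ν}(γ₁): (i) ⟨γ₁, L_{k,k+ν}(γ₁)⟩ = (2n₂cos ν)/n + ((n₁ − n₂)/n)e^{iν}; (ii) ⟨γ_l, L_{k,k+ν}(γ₁)⟩ = 0 for 2 ≤ l ≤ n₁; (iii) ⟨γ_l, L_{k,k+ν}(γ₁)⟩ = 2n₁ i sin(ν)/√(n·l(l−1)) for n₁ + 1 ≤ l ≤ n; (iv) ⟨E, L_{k,k+ν}(γ₁)⟩ = 0 for every n×n matrix E whose diagonal entries are all zero. -/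

import Mathlib

open Matrix Complex

/-- The normalized diagonal Gell-Mann matrices in dimension `n`: `γ₁ = I/√n`, and for
`2 ≤ l ≤ n`, `γ_l = h_l/√(l(l−1))` where `h_l` is diagonal with `(h_l)_{ii} = 1` for `i < l`
(1-based), `(h_l)_{ll} = −(l−1)`, and `0` elsewhere. -/
noncomputable def gellMannDiag (n l : ℕ) : Matrix (Fin n) (Fin n) ℂ :=
  if l = 1 then ((Real.sqrt n : ℝ) : ℂ)⁻¹ • 1
  else ((Real.sqrt (l * (l - 1)) : ℝ) : ℂ)⁻¹ •
    Matrix.diagonal (fun i : Fin n => if (i : ℕ) + 1 < l then 1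
      else if (i : ℕ) + 1 = l then -((l : ℂ) - 1) else 0)

/-- The Hilbert–Schmidt inner product on `n×n` complex matrices: `⟨X, Y⟩ = Tr(X* Y)`. -/
noncomputable def hsInner {n : ℕ} (X Y : Matrix (Fin n) (Fin n) ℂ) : ℂ :=
  (Xᴴ * Y).trace

/-- Hilbert–Schmidt inner products of `L_{k,k+ν}(γ₁)` with the normalized
diagonal Gell-Mann matrices:
(i) `⟨γ₁, L_{k,k+ν}(γ₁)⟩ = (2n₂ cos ν)/n + ((n₁−n₂)/n)e^{iν}`;
(ii) `⟨γ_l, L_{k,k+ν}(γ₁)⟩ = 0` for `2 ≤ l ≤ n₁`;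
(iii) `⟨γ_l, L_{k,k+ν}(γ₁)⟩ = 2n₁ i sin ν / √(n·l(l−1))` for `n₁+1 ≤ l ≤ n`;
(iv) `⟨E, L_{k,k+ν}(γ₁)⟩ = 0` whenever all diagonal entries of `E` vanish. -/
theorem stmt11 {n n₁ : ℕ} (hn₁ : 1 ≤ n₁) (hn : n₁ < n) (n₂ : ℕ) (hn₂ : n₂ = n - n₁)
    (U : Matrix (Fin n) (Fin n) ℂ) (hU : U ∈ Matrix.unitaryGroup (Fin n) ℂ)
    (p q : ℝ) (hp0 : 0 ≤ p) (hp1 : p ≤ 1) (hq : q = 1 - p)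
    (P1 P2 B1 B2 : Matrix (Fin n) (Fin n) ℂ)
    (hP1 : P1 = Matrix.diagonal (fun i : Fin n => if (i : ℕ) < n₁ then (1 : ℂ) else 0))
    (hP2 : P2 = 1 - P1) (hB1 : B1 = P1 * U) (hB2 : B2 = P2 * U)
    (Uk : ℝ → Matrix (Fin n) (Fin n) ℂ)
    (hUk : ∀ k : ℝ, Uk k = Complex.exp (-Complex.I * k) • B1 + Complex.exp (Complex.I * k) • B2)
    (Lsup : ℝ → ℝ → Matrix (Fin n) (Fin n) ℂ → Matrix (Fin n) (Fin n) ℂ)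
    (hLsup : ∀ (k k' : ℝ) ρ, Lsup k k' ρ =
      (p : ℂ) • (Complex.exp (Complex.I * ((k' : ℂ) - (k : ℂ))) • (B1 * ρ * B1ᴴ) +
        Complex.exp (-Complex.I * ((k' : ℂ) - (k : ℂ))) • (B2 * ρ * B2ᴴ)) +
      (q : ℂ) • (Uk k * ρ * (Uk k')ᴴ))
    (k ν : ℝ) :
    hsInner (gellMannDiag n 1) (Lsup k (k + ν) (gellMannDiag n 1)) =
        (2 * n₂ * Real.cos ν) / n + (((n₁ : ℂ) - (n₂ : ℂ)) / n) * Complex.exp (Complex.I * ν) ∧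
    (∀ l : ℕ, 2 ≤ l → l ≤ n₁ →
        hsInner (gellMannDiag n l) (Lsup k (k + ν) (gellMannDiag n 1)) = 0) ∧
    (∀ l : ℕ, n₁ + 1 ≤ l → l ≤ n →
        hsInner (gellMannDiag n l) (Lsup k (k + ν) (gellMannDiag n 1)) =
          2 * n₁ * Complex.I * Real.sin ν / ((Real.sqrt (n * l * (l - 1)) : ℝ) : ℂ)) ∧
    (∀ E : Matrix (Fin n) (Fin n) ℂ, (∀ i, E i i = 0) →
        hsInner E (Lsup k (k + ν) (gellMannDiag n 1)) = 0) := by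
  have hn0 : (0:ℝ) ≤ (n:ℝ) := by positivity
  have hpq : (p:ℂ) + (q:ℂ) = 1 := by rw [hq]; push_cast; ring
  set A : ℂ := Complex.exp (Complex.I * ν) with hA
  set Bc : ℂ := Complex.exp (-Complex.I * ν) with hBc
  set s : ℂ := ((Real.sqrt n : ℝ) : ℂ)⁻¹ with hs
  have hUU : U * Uᴴ = 1 := by
    have := Matrix.mem_unitaryGroup_iff.mp hU
    simpa [Matrix.star_eq_conjTranspose] using this
  have hP1H : P1ᴴ = P1 := by
    rw [hP1]
    ext i j
    rcases eq_or_ne i j with rfl | hij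
    · by_cases h : (i:ℕ) < n₁ <;> simp [Matrix.conjTranspose_apply, h]
    · simp [Matrix.conjTranspose_apply, Matrix.diagonal_apply_ne _ hij,
        Matrix.diagonal_apply_ne _ hij.symm]
  have hP2H : P2ᴴ = P2 := by rw [hP2]; simp [hP1H]
  have hP11 : P1 * P1 = P1 := by
    rw [hP1, Matrix.diagonal_mul_diagonal]
    refine congrArg _ (funext fun i => ?_)
    by_cases h : (i:ℕ) < n₁ <;> simp [h]
  have key : ∀ (Q R : Matrix (Fin n) (Fin n) ℂ), (Q*U) * (R*U)ᴴ = Q * Rᴴ := by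
    intro Q R
    rw [Matrix.conjTranspose_mul, Matrix.mul_assoc, ← Matrix.mul_assoc U, hUU, Matrix.one_mul]
  have hB11 : B1 * B1ᴴ = P1 := by rw [hB1, key, hP1H, hP11]
  have hB22 : B2 * B2ᴴ = P2 := by
    rw [hB2, key, hP2H, hP2, Matrix.mul_sub, Matrix.sub_mul, Matrix.sub_mul, hP11]
    simp
  have hB12 : B1 * B2ᴴ = 0 := by
    rw [hB1, hB2, key, hP2H, hP2, Matrix.mul_sub, hP11]
    simp
  have hB21 : B2 * B1ᴴ = 0 := by
    rw [hB1, hB2, key, hP1H, hP2, Matrix.sub_mul, hP11]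
    simp
  have hγ1 : gellMannDiag n 1 = s • (1 : Matrix (Fin n) (Fin n) ℂ) := by
    rw [gellMannDiag]; simp [hs]
  have key3 : ((k+ν:ℝ):ℂ) - (k:ℂ) = (ν:ℂ) := by push_cast; ring
  have hc1 : (starRingEnd ℂ) (Complex.exp (-Complex.I * ((k+ν:ℝ):ℂ))) =
      Complex.exp (Complex.I * ((k+ν:ℝ):ℂ)) := by
    rw [← Complex.exp_conj]
    congr 1
    simp [_root_.map_mul, Complex.conj_I, Complex.conj_ofReal]
  have hc2 : (starRingEnd ℂ) (Complex.exp (Complex.I * ((k+ν:ℝ):ℂ))) =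
      Complex.exp (-Complex.I * ((k+ν:ℝ):ℂ)) := by
    rw [← Complex.exp_conj]
    congr 1
    simp [_root_.map_mul, Complex.conj_I, Complex.conj_ofReal]
  have pe1 : Complex.exp (-Complex.I * (k:ℂ)) * Complex.exp (Complex.I * ((k+ν:ℝ):ℂ)) = A := by
    rw [← Complex.exp_add, hA]
    congr 1
    push_cast
    ring
  have pe2 : Complex.exp (Complex.I * (k:ℂ)) * Complex.exp (-Complex.I * ((k+ν:ℝ):ℂ)) = Bc := by
    rw [← Complex.exp_add, hBc]
    congr 1
    push_cast
    ring
  have hM : Lsup k (k+ν) (gellMannDiag n 1) = s • (A • P1 + Bc • P2) := by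
    rw [hLsup, key3, hγ1, hUk, hUk]
    simp only [Matrix.conjTranspose_add, Matrix.conjTranspose_smul, hc1, hc2,
      Matrix.smul_mul, Matrix.mul_smul, Matrix.mul_one, Matrix.add_mul, Matrix.mul_add,
      hB11, hB22, hB12, hB21, smul_zero, add_zero, zero_add, smul_add, smul_smul]
    have hb1 : star (Complex.exp (-Complex.I * ((k:ℂ) + (ν:ℂ)))) =
        Complex.exp (Complex.I * ((k+ν:ℝ):ℂ)) := by
      rw [show -Complex.I * ((k:ℂ)+(ν:ℂ)) = -Complex.I * ((k+ν:ℝ):ℂ) by push_cast; ring]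
      simpa using hc1
    have hb2 : star (Complex.exp (Complex.I * ((k:ℂ) + (ν:ℂ)))) =
        Complex.exp (-Complex.I * ((k+ν:ℝ):ℂ)) := by
      rw [show Complex.I * ((k:ℂ)+(ν:ℂ)) = Complex.I * ((k+ν:ℝ):ℂ) by push_cast; ring]
      simpa using hc2
    match_scalars
    · linear_combination (q*s) * pe1 + (s*A) * hpq + (s*q*Complex.exp (-Complex.I*(k:ℂ))) * hb1
    · linear_combination (q*s) * pe2 + (s*Bc) * hpq + (s*q*Complex.exp (Complex.I*(k:ℂ))) * hb2
  have hD : A • P1 + Bc • P2 =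
      Matrix.diagonal (fun i : Fin n => if (i:ℕ) < n₁ then A else Bc) := by
    rw [hP2, hP1]
    ext i j
    by_cases hij : i = j
    · subst hij
      by_cases h : (i:ℕ) < n₁ <;>
        simp [Matrix.diagonal_apply_eq, Matrix.one_apply_eq, h]
    · simp [Matrix.diagonal_apply_ne _ hij, Matrix.one_apply_ne hij]
  have hsum_inner : ∀ X : Matrix (Fin n) (Fin n) ℂ,
      hsInner X (Lsup k (k+ν) (gellMannDiag n 1)) =
        s * ∑ i : Fin n, (starRingEnd ℂ) (X i i) * (if (i:ℕ) < n₁ then A else Bc) := by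
    intro X
    rw [hM, hD]
    simp [hsInner, Matrix.trace, Matrix.diag, Matrix.mul_smul, Matrix.mul_diagonal,
      Matrix.conjTranspose_apply, Finset.mul_sum]
  have hsS : s * s = ((n:ℝ):ℂ)⁻¹ := by
    rw [hs, ← mul_inv, ← Complex.ofReal_mul, Real.mul_self_sqrt hn0]
  have hAB : A - Bc = 2 * Complex.I * (Real.sin ν : ℂ) := by
    have h1 : A = Complex.cos ν + Complex.sin ν * Complex.I := by
      rw [hA, mul_comm, Complex.exp_mul_I]
    have h2 : Bc = Complex.cos ν - Complex.sin ν * Complex.I := by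
      rw [hBc, show -Complex.I * (ν:ℂ) = ((-(ν:ℂ))) * Complex.I by ring,
        Complex.exp_mul_I, Complex.cos_neg, Complex.sin_neg]
      ring
    rw [h1, h2, Complex.ofReal_sin]
    ring
  have hApB : A + Bc = 2 * (Real.cos ν : ℂ) := by
    have h1 : A = Complex.cos ν + Complex.sin ν * Complex.I := by
      rw [hA, mul_comm, Complex.exp_mul_I]
    have h2 : Bc = Complex.cos ν - Complex.sin ν * Complex.I := by
      rw [hBc, show -Complex.I * (ν:ℂ) = ((-(ν:ℂ))) * Complex.I by ring,
        Complex.exp_mul_I, Complex.cos_neg, Complex.sin_neg]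
      ring
    rw [h1, h2, Complex.ofReal_cos]
    ring
  have count1 : ∀ a b : ℂ, (∑ i : Fin n, (if (i:ℕ) < n₁ then a else b)) =
      (n₁:ℂ) * a + ((n - n₁ : ℕ) : ℂ) * b := by
    intro a b
    rw [Fin.sum_univ_eq_sum_range (fun i => if i < n₁ then a else b) n, Finset.sum_ite]
    have h1 : (Finset.range n).filter (fun i => i < n₁) = Finset.range n₁ := by
      ext i; simp; omega
    have h2 : (Finset.range n).filter (fun i => ¬ i < n₁) = Finset.Ico n₁ n := by
      ext i; simp; omega
    rw [h1, h2]
    simp [Finset.sum_const, Nat.card_Ico, mul_comm]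
  have sumh : ∀ l : ℕ, 2 ≤ l → l ≤ n → ∀ d : ℕ → ℂ,
      (∑ i : Fin n, (if (i:ℕ)+1 < l then (1:ℂ) else if (i:ℕ)+1 = l then -((l:ℂ)-1) else 0) * d (i:ℕ))
        = (∑ i ∈ Finset.range (l-1), d i) - ((l:ℂ)-1) * d (l-1) := by
    intro l hl2 hln d
    rw [Fin.sum_univ_eq_sum_range
      (fun i => (if i+1 < l then (1:ℂ) else if i+1 = l then -((l:ℂ)-1) else 0) * d i) n]
    have hsplit : ∀ i, (if i+1 < l then (1:ℂ) else if i+1 = l then -((l:ℂ)-1) else 0) * d i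
        = (if i < l-1 then d i else 0) + (if i = l-1 then -((l:ℂ)-1) * d i else 0) := by
      intro i
      by_cases h1 : i + 1 < l
      · have h2 : i < l - 1 := by omega
        have h3 : i ≠ l - 1 := by omega
        simp [h1, h2, h3]
      · by_cases h2 : i + 1 = l
        · have h4 : i = l-1 := by omega
          have h5 : ¬ i < l - 1 := by omega
          rw [if_neg h1, if_pos h2, if_neg h5, if_pos h4, zero_add]
        · have h3 : ¬ i < l-1 := by omega
          have h4 : i ≠ l-1 := by omega
          simp [h1, h2, h3, h4]
    simp only [hsplit]
    rw [Finset.sum_add_distrib]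
    have hA1 : (∑ i ∈ Finset.range n, if i < l-1 then d i else 0)
        = ∑ i ∈ Finset.range (l-1), d i := by
      rw [← Finset.sum_filter]
      refine Finset.sum_congr ?_ (fun _ _ => rfl)
      ext i; simp; omega
    have hA2 : (∑ i ∈ Finset.range n, if i = l - 1 then -((l:ℂ)-1) * d i else 0)
        = -((l:ℂ)-1) * d (l-1) := by
      rw [Finset.sum_ite_eq' (Finset.range n) (l-1) (fun i => -((l:ℂ)-1) * d i),
        if_pos (by simp; omega : l - 1 ∈ Finset.range n)]
    rw [hA1, hA2]
    ring
  have hγl : ∀ l : ℕ, 2 ≤ l → ∀ i : Fin n,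
      (starRingEnd ℂ) ((gellMannDiag n l) i i) =
        ((Real.sqrt ((l:ℝ) * ((l:ℝ) - 1)) : ℝ) : ℂ)⁻¹ *
          (if (i:ℕ)+1 < l then (1:ℂ) else if (i:ℕ)+1 = l then -((l:ℂ)-1) else 0) := by
    intro l hl2 i
    have hl1 : l ≠ 1 := by omega
    rw [gellMannDiag, if_neg hl1]
    simp only [Matrix.smul_apply, Matrix.diagonal_apply_eq, smul_eq_mul, _root_.map_mul,
      map_inv₀, Complex.conj_ofReal]
    congr 1
    by_cases h1 : (i:ℕ)+1 < l
    · simp [h1]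
    · by_cases h2 : (i:ℕ)+1 = l
      · simp [h1, h2]
      · simp [h1, h2]
  refine ⟨?_, ?_, ?_, ?_⟩
  · -- part (i)
    rw [hsum_inner]
    have hX : ∀ i : Fin n, (starRingEnd ℂ) ((gellMannDiag n 1) i i) = s := by
      intro i
      rw [hγ1]
      simp [hs, Complex.conj_ofReal]
    simp only [hX]
    rw [← Finset.mul_sum, count1]
    have hn₂' : ((n - n₁ : ℕ) : ℂ) = (n₂ : ℂ) := by rw [hn₂]
    rw [hn₂']
    have hBc' : Bc = 2 * ((Real.cos ν : ℝ) : ℂ) - A := by linear_combination hApB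
    rw [hBc']
    have hnne : ((n:ℝ):ℂ) ≠ 0 := by
      simp only [ne_eq, Complex.ofReal_natCast, Nat.cast_eq_zero]
      omega
    have : s * (s * ((n₁:ℂ) * A + (n₂:ℂ) * (2 * ((Real.cos ν : ℝ) : ℂ) - A)))
        = (s*s) * ((n₁:ℂ) * A + (n₂:ℂ) * (2 * ((Real.cos ν : ℝ) : ℂ) - A)) := by ring
    rw [this, hsS]
    simp only [Complex.ofReal_natCast] at hnne ⊢
    field_simp
    ring
  · -- part (ii)
    intro l hl2 hln₁
    rw [hsum_inner]
    simp only [hγl l hl2, mul_assoc]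
    rw [← Finset.mul_sum,
      sumh l hl2 (by omega) (fun i => if i < n₁ then A else Bc)]
    have e1 : ∀ i ∈ Finset.range (l-1), (if i < n₁ then A else Bc) = A := by
      intro i hi
      rw [if_pos]
      simp at hi
      omega
    rw [Finset.sum_congr rfl e1, Finset.sum_const, Finset.card_range]
    have e2 : (if l - 1 < n₁ then A else Bc) = A := by rw [if_pos]; omega
    rw [e2]
    have : ((l-1:ℕ):ℂ) = (l:ℂ) - 1 := by
      push_cast [Nat.cast_sub (by omega : 1 ≤ l)]
      ring
    rw [nsmul_eq_mul, this]
    ring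
  · -- part (iii)
    intro l hl1 hln
    rw [hsum_inner]
    simp only [hγl l (by omega), mul_assoc]
    rw [← Finset.mul_sum,
      sumh l (by omega) hln (fun i => if i < n₁ then A else Bc)]
    have hsplit : Finset.range (l-1) = Finset.Ico 0 n₁ ∪ Finset.Ico n₁ (l-1) := by
      rw [Finset.range_eq_Ico, Finset.Ico_union_Ico_eq_Ico (Nat.zero_le n₁) (by omega)]
    rw [hsplit, Finset.sum_union (by
      apply Finset.Ico_disjoint_Ico_consecutive)]
    have e1 : ∀ i ∈ Finset.Ico 0 n₁, (if i < n₁ then A else Bc) = A := by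
      intro i hi
      rw [if_pos]
      simp at hi
      omega
    have e2 : ∀ i ∈ Finset.Ico n₁ (l-1), (if i < n₁ then A else Bc) = Bc := by
      intro i hi
      rw [if_neg]
      simp at hi
      omega
    rw [Finset.sum_congr rfl e1, Finset.sum_congr rfl e2, Finset.sum_const, Finset.sum_const,
      Nat.card_Ico, Nat.card_Ico]
    have e3 : (if l - 1 < n₁ then A else Bc) = Bc := by rw [if_neg]; omega
    rw [e3]
    have c1 : ((n₁ - 0 : ℕ):ℂ) = (n₁:ℂ) := by norm_num
    have c2 : ((l - 1 - n₁ : ℕ):ℂ) = (l:ℂ) - 1 - (n₁:ℂ) := by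
      push_cast [Nat.cast_sub (by omega : n₁ ≤ l - 1), Nat.cast_sub (by omega : 1 ≤ l)]
      ring
    rw [nsmul_eq_mul, nsmul_eq_mul, c1, c2]
    have hstep : (n₁:ℂ) * A + ((l:ℂ) - 1 - (n₁:ℂ)) * Bc - ((l:ℂ)-1) * Bc
        = (n₁:ℂ) * (A - Bc) := by ring
    have hsqrt : Real.sqrt ((n:ℝ) * ((l:ℝ) * ((l:ℝ) - 1)))
        = Real.sqrt (n:ℝ) * Real.sqrt ((l:ℝ) * ((l:ℝ) - 1)) := by
      rw [Real.sqrt_mul hn0]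
    rw [hsqrt]
    rw [show s * (((Real.sqrt ((l:ℝ) * ((l:ℝ) - 1)) : ℝ) : ℂ)⁻¹ *
        ((n₁:ℂ) * A + ((l:ℂ) - 1 - (n₁:ℂ)) * Bc - ((l:ℂ)-1) * Bc))
      = s * (((Real.sqrt ((l:ℝ) * ((l:ℝ) - 1)) : ℝ) : ℂ)⁻¹ * ((n₁:ℂ) * (A - Bc))) from by
        rw [hstep]]
    rw [hAB, hs]
    push_cast
    rw [div_eq_mul_inv, mul_inv]
    ring
  · -- part (iv)
    intro E hE
    rw [hsum_inner]
    simp [hE]
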